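/- The Gibbs risk λ ↦ ∑ᵢ πᵢ(λ) ℓᵢ, where πᵢ(λ) = exp(-ℓᵢ/λ)/∑ⱼ exp(-ℓⱼ/λ), is monotonically nondecreasing in λ > 0. -/
import Mathlib


open Finset Real

theorem gibbs_risk_monotone (n : ℕ) (ℓ : Fin n → ℝ) (lam₁ lam₂ : ℝ)
    (h₁ : 0 < lam₁) (h₁₂ : lam₁ ≤ lam₂) :
    ∑ i, (Real.exp (-ℓ i / lam₁) / ∑ j, Real.exp (-ℓ j / lam₁)) * ℓ i
      ≤ ∑ i, (Real.exp (-ℓ i / lam₂) / ∑ j, Real.exp (-ℓ j / lam₂)) * ℓ i := by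
  rcases Nat.eq_zero_or_pos n with hn | hn
  · subst hn; simp
  have h₂ : (0:ℝ) < lam₂ := lt_of_lt_of_le h₁ h₁₂
  set A : Fin n → ℝ := fun i => Real.exp (-ℓ i / lam₁) with hA
  set B : Fin n → ℝ := fun i => Real.exp (-ℓ i / lam₂) with hB
  have hne : (Finset.univ : Finset (Fin n)).Nonempty := by
    simpa [Finset.univ_nonempty_iff] using Fin.pos_iff_nonempty.mp hn
  have hSA : 0 < ∑ j, A j := Finset.sum_pos (fun i _ => Real.exp_pos _) hne
  have hSB : 0 < ∑ j, B j := Finset.sum_pos (fun i _ => Real.exp_pos _) hne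
  have hmono : ∀ i j, ℓ i ≤ ℓ j → A j * B i ≤ A i * B j := by
    intro i j hij
    rw [hA, hB]
    simp only
    rw [← Real.exp_add, ← Real.exp_add, Real.exp_le_exp]
    have hd : (ℓ j - ℓ i) / lam₂ ≤ (ℓ j - ℓ i) / lam₁ :=
      div_le_div_of_nonneg_left (sub_nonneg.2 hij) h₁ h₁₂
    rw [sub_div, sub_div] at hd
    simp only [neg_div]
    linarith
  have key : ∀ i j, ℓ i * (A i * B j) + ℓ j * (A j * B i)
      ≤ ℓ j * (A i * B j) + ℓ i * (A j * B i) := by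
    intro i j
    rcases le_total (ℓ i) (ℓ j) with h | h
    · have := hmono i j h; nlinarith
    · have := hmono j i h; nlinarith
  have lhs_eq : ∑ i, (A i / ∑ j, A j) * ℓ i = (∑ i, A i * ℓ i) / ∑ j, A j := by
    rw [Finset.sum_div]
    exact Finset.sum_congr rfl fun i _ => by ring
  have rhs_eq : ∑ i, (B i / ∑ j, B j) * ℓ i = (∑ i, B i * ℓ i) / ∑ j, B j := by
    rw [Finset.sum_div]
    exact Finset.sum_congr rfl fun i _ => by ring
  rw [lhs_eq, rhs_eq, div_le_div_iff₀ hSA hSB]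
  rw [Finset.sum_mul_sum, Finset.sum_mul_sum]
  have h2 : ∀ S T : ℝ, S + S ≤ T + T → S ≤ T := by intro S T h; linarith
  apply h2
  have swapL : ∑ i, ∑ j, A i * ℓ i * B j = ∑ i, ∑ j, A j * ℓ j * B i :=
    Finset.sum_comm
  have swapR : ∑ i, ∑ j, B i * ℓ i * A j = ∑ i, ∑ j, B j * ℓ j * A i :=
    Finset.sum_comm
  calc (∑ i, ∑ j, A i * ℓ i * B j) + ∑ i, ∑ j, A i * ℓ i * B j
      = ∑ i, ∑ j, (ℓ i * (A i * B j) + ℓ j * (A j * B i)) := by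
        
        nth_rewrite 1 [swapL]
        rw [← Finset.sum_add_distrib]
        refine Finset.sum_congr rfl fun i _ => ?_
        rw [← Finset.sum_add_distrib]
        exact Finset.sum_congr rfl fun j _ => by ring
    _ ≤ ∑ i, ∑ j, (ℓ j * (A i * B j) + ℓ i * (A j * B i)) :=
        Finset.sum_le_sum fun i _ => Finset.sum_le_sum fun j _ => key i j
    _ = (∑ i, ∑ j, B i * ℓ i * A j) + ∑ i, ∑ j, B i * ℓ i * A j := by
        nth_rewrite 2 [swapR]
        rw [← Finset.sum_add_distrib]
        refine Finset.sum_congr rfl fun i _ => ?_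
        rw [← Finset.sum_add_distrib]
        exact Finset.sum_congr rfl fun j _ => by ring
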